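/- Let $K$ be a Markov kernel on a finite set with KL contraction coefficient $\eta := \eta_{KL}(K) = \sup_{q,p: 0< D_{KL}(q\Vert p)<\infty} \frac{D_{KL}(Kq\Vert Kp)}{D_{KL}(q\Vert p)}$ and let $K^{\otimes D}$ be its $D$-fold product acting coordinatewise on a product space. Let $q^{1:D}, p^{1:D}$ be distributions on the product with finite divergences. Then $D_{KL}(K^{\otimes D}q^{1:D} \Vert K^{\otimes D}p^{1:D}) \le \eta\left(D_{KL}(q^{1:D}\Vert p^{1:D}) - \mathrm{TC}(q^{1:D}) + \mathrm{CrossTC}_{p^{1:D}}(q^{1:D})\right) + \mathrm{TC}(K^{\otimes D}q^{1:D}) - \mathrm{CrossTC}_{K^{\otimes D}p^{1:D}}(K^{\otimes D}q^{1:D})$. -/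

import Mathlib

open Finset

/-- KL divergence between two distributions on a finite type (convention `0 log 0 = 0`). -/
noncomputable def klDiv {α : Type*} [Fintype α] (q p : α → ℝ) : ℝ :=
  ∑ x, q x * Real.log (q x / p x)

/-- Pushforward of a distribution through a Markov kernel on a finite set. -/
noncomputable def push {S : Type*} [Fintype S] (K : S → S → ℝ) (q : S → ℝ) : S → ℝ :=
  fun y => ∑ x, K x y * q x

/-- Pushforward through the `D`-fold product kernel `K^{⊗D}` acting coordinatewise. -/
noncomputable def prodPush {D : ℕ} {S : Type*} [Fintype S] [DecidableEq S]
    (K : S → S → ℝ) (q : (Fin D → S) → ℝ) : (Fin D → S) → ℝ :=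
  fun y => ∑ x, (∏ d, K (x d) (y d)) * q x

/-- The `d`-th coordinate marginal of a distribution on the product space `S^D`. -/
noncomputable def marg {D : ℕ} {S : Type*} [Fintype S] [DecidableEq S]
    (q : (Fin D → S) → ℝ) (d : Fin D) (a : S) : ℝ :=
  ∑ x, if x d = a then q x else 0

/-- Total correlation: `TC(q) = D_KL(q ‖ ∏_d q^d)`. -/
noncomputable def totalCorr {D : ℕ} {S : Type*} [Fintype S] [DecidableEq S]
    (q : (Fin D → S) → ℝ) : ℝ :=
  ∑ x, q x * Real.log (q x / ∏ d, marg q d (x d))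

/-- Cross total correlation: `CrossTC_p(q) = 𝔼_q[log (p(x) / ∏_d p^d(x^d))]`. -/
noncomputable def crossTotalCorr {D : ℕ} {S : Type*} [Fintype S] [DecidableEq S]
    (p q : (Fin D → S) → ℝ) : ℝ :=
  ∑ x, q x * Real.log (p x / ∏ d, marg p d (x d))

/-- Multidimensional KL contraction for product kernels: if `K` contracts KL divergence by
`η` on single coordinates, then
`D_KL(K^{⊗D}q ‖ K^{⊗D}p) ≤ η (D_KL(q ‖ p) - TC(q) + CrossTC_p(q))
  + TC(K^{⊗D}q) - CrossTC_{K^{⊗D}p}(K^{⊗D}q)`. -/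
lemma marg_nonneg {D : ℕ} {S : Type*} [Fintype S] [DecidableEq S]
    (q : (Fin D → S) → ℝ) (hq0 : ∀ x, 0 ≤ q x) (d : Fin D) (a : S) : 0 ≤ marg q d a := by
  apply Finset.sum_nonneg; intro x _; split <;> simp [hq0 x]

lemma marg_ge {D : ℕ} {S : Type*} [Fintype S] [DecidableEq S]
    (q : (Fin D → S) → ℝ) (hq0 : ∀ x, 0 ≤ q x) (d : Fin D) (x : Fin D → S) :
    q x ≤ marg q d (x d) := by
  have := Finset.single_le_sum (f := fun x' => if x' d = x d then q x' else 0)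
    (fun i _ => by split <;> simp [hq0 i]) (Finset.mem_univ x)
  simpa [marg] using this

lemma marg_sum {D : ℕ} {S : Type*} [Fintype S] [DecidableEq S]
    (q : (Fin D → S) → ℝ) (d : Fin D) : ∑ a, marg q d a = ∑ x, q x := by
  unfold marg
  rw [Finset.sum_comm]
  apply Finset.sum_congr rfl
  intro x _
  simp

lemma sum_marg_mul {D : ℕ} {S : Type*} [Fintype S] [DecidableEq S]
    (q : (Fin D → S) → ℝ) (d : Fin D) (f : S → ℝ) :
    ∑ a, marg q d a * f a = ∑ x, q x * f (x d) := by
  unfold marg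
  simp_rw [Finset.sum_mul]
  rw [Finset.sum_comm]
  apply Finset.sum_congr rfl
  intro x _
  rw [Finset.sum_congr rfl (fun a _ => by rw [ite_mul, zero_mul])]
  simp

lemma fiber_sum {D : ℕ} {S : Type*} [Fintype S] [DecidableEq S]
    (K : S → S → ℝ) (hK1 : ∀ x, ∑ y, K x y = 1) (x : Fin D → S) (d : Fin D) (a : S) :
    ∑ y : Fin D → S, (if y d = a then ∏ e, K (x e) (y e) else 0) = K (x d) a := by
  have h1 : ∀ y : Fin D → S, (if y d = a then ∏ e, K (x e) (y e) else 0)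
      = ∏ e, (fun e b => if e = d then (if b = a then K (x e) b else 0) else K (x e) b) e (y e) := by
    intro y
    by_cases h : y d = a
    · simp only [h, if_true]
      apply Finset.prod_congr rfl
      intro e _
      by_cases he : e = d <;> simp [he, h]
    · rw [if_neg h]
      symm
      apply Finset.prod_eq_zero (Finset.mem_univ d)
      simp [h]
  rw [Finset.sum_congr rfl (fun y _ => h1 y)]
  rw [← Fintype.prod_sum (fun e b => if e = d then (if b = a then K (x e) b else 0) else K (x e) b)]
  rw [Finset.prod_eq_single d]
  · simp [Finset.sum_ite_eq' Finset.univ a (fun b => K (x d) b)]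
  · intro e _ he
    simp [he, hK1 (x e)]
  · simp

lemma marg_prodPush {D : ℕ} {S : Type*} [Fintype S] [DecidableEq S]
    (K : S → S → ℝ) (hK1 : ∀ x, ∑ y, K x y = 1)
    (q : (Fin D → S) → ℝ) (d : Fin D) (a : S) :
    marg (prodPush K q) d a = push K (marg q d) a := by
  have hL : marg (prodPush K q) d a = ∑ x, K (x d) a * q x := by
    unfold marg prodPush
    rw [Finset.sum_congr rfl (fun y (_ : y ∈ Finset.univ) => by
      rw [show (if y d = a then ∑ x, (∏ e, K (x e) (y e)) * q x else 0)
        = ∑ x, (if y d = a then ∏ e, K (x e) (y e) else 0) * q x by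
          split <;> simp [Finset.sum_mul]])]
    rw [Finset.sum_comm]
    apply Finset.sum_congr rfl
    intro x _
    rw [← Finset.sum_mul, fiber_sum K hK1 x d a]
  rw [hL, push]
  calc ∑ x, K (x d) a * q x = ∑ x, q x * (fun b => K b a) (x d) := by
        simp [mul_comm]
    _ = ∑ b, marg q d b * (fun b => K b a) b := (sum_marg_mul q d (fun b => K b a)).symm
    _ = ∑ b, K b a * marg q d b := by simp [mul_comm]

lemma kl_decomp {D : ℕ} {S : Type*} [Fintype S] [DecidableEq S]
    (q p : (Fin D → S) → ℝ) (hq0 : ∀ x, 0 ≤ q x)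
    (hac : ∀ x, q x ≠ 0 → 0 < p x)
    (hpd : ∀ x, q x ≠ 0 → ∀ d, 0 < marg p d (x d)) :
    klDiv q p = totalCorr q - crossTotalCorr p q + ∑ d, klDiv (marg q d) (marg p d) := by
  have hterm : ∀ x, q x * Real.log (q x / p x)
      = q x * Real.log (q x / ∏ d, marg q d (x d))
        - q x * Real.log (p x / ∏ d, marg p d (x d))
        + ∑ d, q x * Real.log (marg q d (x d) / marg p d (x d)) := by
    intro x
    by_cases hx : q x = 0
    · simp [hx]
    · have hq : 0 < q x := lt_of_le_of_ne (hq0 x) (Ne.symm hx)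
      have hp : 0 < p x := hac x hx
      have hqd : ∀ d, 0 < marg q d (x d) := fun d => lt_of_lt_of_le hq (marg_ge q hq0 d x)
      have hpd' : ∀ d, 0 < marg p d (x d) := hpd x hx
      have hs : ∑ d, q x * Real.log (marg q d (x d) / marg p d (x d))
          = q x * ((∑ d, Real.log (marg q d (x d))) - ∑ d, Real.log (marg p d (x d))) := by
        rw [← Finset.mul_sum]
        congr 1
        rw [← Finset.sum_sub_distrib]
        exact Finset.sum_congr rfl fun d _ => Real.log_div (hqd d).ne' (hpd' d).ne'
      rw [hs, Real.log_div hx hp.ne', Real.log_div hx (Finset.prod_pos fun d _ => hqd d).ne',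
        Real.log_div hp.ne' (Finset.prod_pos fun d _ => hpd' d).ne',
        Real.log_prod (fun d _ => (hqd d).ne'),
        Real.log_prod (fun d _ => (hpd' d).ne')]
      ring
  unfold klDiv totalCorr crossTotalCorr
  rw [Finset.sum_congr rfl (fun x _ => hterm x), Finset.sum_add_distrib,
    Finset.sum_sub_distrib, Finset.sum_comm]
  congr 1
  apply Finset.sum_congr rfl
  intro d _
  exact (sum_marg_mul q d (fun a => Real.log (marg q d a / marg p d a))).symm

theorem product_kernel_kl_contraction
    {D : ℕ} {S : Type*} [Fintype S] [DecidableEq S]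
    (K : S → S → ℝ) (hK0 : ∀ x y, 0 ≤ K x y) (hK1 : ∀ x, ∑ y, K x y = 1)
    (η : ℝ) (hη0 : 0 ≤ η)
    (hη : ∀ q' p' : S → ℝ, (∀ x, 0 ≤ q' x) → ∑ x, q' x = 1 →
      (∀ x, 0 ≤ p' x) → ∑ x, p' x = 1 → (∀ x, p' x = 0 → q' x = 0) →
      klDiv (push K q') (push K p') ≤ η * klDiv q' p')
    (q p : (Fin D → S) → ℝ)
    (hq0 : ∀ x, 0 ≤ q x) (hq1 : ∑ x, q x = 1)
    (hp0 : ∀ x, 0 ≤ p x) (hp1 : ∑ x, p x = 1)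
    (hac : ∀ x, p x = 0 → q x = 0)
    (hpd : ∀ d a, 0 < marg p d a)
    (hKpd : ∀ d a, 0 < marg (prodPush K p) d a) :
    klDiv (prodPush K q) (prodPush K p)
      ≤ η * (klDiv q p - totalCorr q + crossTotalCorr p q)
        + totalCorr (prodPush K q) - crossTotalCorr (prodPush K p) (prodPush K q) := by
  -- decomposition for (q, p)
  have hdq := kl_decomp q p hq0
    (fun x hx => lt_of_le_of_ne (hp0 x) (fun h => hx (hac x h.symm)))
    (fun x _ d => hpd d (x d))
  -- nonnegativity of pushed distributions
  have hKq0 : ∀ x, 0 ≤ prodPush K q x := fun x =>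
    Finset.sum_nonneg fun x' _ =>
      mul_nonneg (Finset.prod_nonneg fun d _ => hK0 _ _) (hq0 x')
  have hKp0 : ∀ x, 0 ≤ prodPush K p x := fun x =>
    Finset.sum_nonneg fun x' _ =>
      mul_nonneg (Finset.prod_nonneg fun d _ => hK0 _ _) (hp0 x')
  -- absolute continuity of pushed distributions
  have hKac : ∀ x, prodPush K p x = 0 → prodPush K q x = 0 := by
    intro x hx
    have h0 : ∀ x' ∈ Finset.univ, (∏ d, K (x' d) (x d)) * p x' = 0 := by
      rw [← Finset.sum_eq_zero_iff_of_nonneg (fun x' _ =>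
        mul_nonneg (Finset.prod_nonneg fun d _ => hK0 _ _) (hp0 x'))]
      exact hx
    apply Finset.sum_eq_zero
    intro x' _
    rcases mul_eq_zero.1 (h0 x' (Finset.mem_univ x')) with h | h
    · rw [h, zero_mul]
    · rw [hac x' h, mul_zero]
  -- decomposition for the pushed pair
  have hdK := kl_decomp (prodPush K q) (prodPush K p) hKq0
    (fun x hx => lt_of_le_of_ne (hKp0 x) (fun h => hx (hKac x h.symm)))
    (fun x _ d => hKpd d (x d))
  -- marginal contraction
  have hmarg : ∀ d, klDiv (marg (prodPush K q) d) (marg (prodPush K p) d)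
      ≤ η * klDiv (marg q d) (marg p d) := by
    intro d
    have hq' : marg (prodPush K q) d = push K (marg q d) := funext fun a =>
      marg_prodPush K hK1 q d a
    have hp' : marg (prodPush K p) d = push K (marg p d) := funext fun a =>
      marg_prodPush K hK1 p d a
    rw [hq', hp']
    exact hη (marg q d) (marg p d) (marg_nonneg q hq0 d) (by rw [marg_sum, hq1])
      (marg_nonneg p hp0 d) (by rw [marg_sum, hp1])
      (fun a ha => absurd ha (hpd d a).ne')
  have hsum : ∑ d, klDiv (marg (prodPush K q) d) (marg (prodPush K p) d)
      ≤ η * ∑ d, klDiv (marg q d) (marg p d) := by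
    rw [Finset.mul_sum]
    exact Finset.sum_le_sum fun d _ => hmarg d
  have hEq : klDiv q p - totalCorr q + crossTotalCorr p q
      = ∑ d, klDiv (marg q d) (marg p d) := by linarith [hdq]
  rw [hdK, hEq]
  nlinarith [hsum]
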